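/- With the setup of a split disjunction and unique (nondegenerate) bases at the term optima p¹, p²: every facet-defining inequality of the disjunctive hull P_D = cl conv(P¹ ∪ P²) that is tight at both p¹ and p² is valid for the simple point-ray hull P_D⁰ = conv({p¹,p²}) + cone(R⁰); i.e., it satisfies α·pᵗ = β and α·r ≥ 0 for all r ∈ R⁰. -/

import Mathlib

open Pointwise

noncomputable section

/-- Dot product on `ℝⁿ`. -/
def dot {n : ℕ} (a x : Fin n → ℝ) : ℝ := ∑ i, a i * x i

/-- Conical (nonnegative) hull of a set of rays. -/
def coneHull {n : ℕ} (R : Set (Fin n → ℝ)) : Set (Fin n → ℝ) :=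
  {y | ∃ (s : Finset (Fin n → ℝ)) (c : (Fin n → ℝ) → ℝ),
      ↑s ⊆ R ∧ (∀ r ∈ s, 0 ≤ c r) ∧ y = ∑ r ∈ s, c r • r}

/-- The point-ray hull `conv(P) + cone(R)` (Minkowski sum). -/
def pointRayHull {n : ℕ} (P R : Set (Fin n → ℝ)) : Set (Fin n → ℝ) :=
  convexHull ℝ P + coneHull R

/-- A polyhedron: intersection of finitely many halfspaces. -/
def IsPolyhedron {n : ℕ} (S : Set (Fin n → ℝ)) : Prop :=
  ∃ (m : ℕ) (A : Fin m → (Fin n → ℝ)) (b : Fin m → ℝ),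
    S = {x | ∀ i, b i ≤ dot (A i) x}

/-- Recession cone of a set. -/
def recessionCone {n : ℕ} (S : Set (Fin n → ℝ)) : Set (Fin n → ℝ) :=
  {r | ∀ x ∈ S, ∀ t : ℝ, 0 ≤ t → x + t • r ∈ S}

/-- A set is pointed if its recession cone contains no line. -/
def IsPointed {n : ℕ} (S : Set (Fin n → ℝ)) : Prop :=
  ∀ r ∈ recessionCone S, -r ∈ recessionCone S → r = 0

/-- `x` generates an extreme ray of the cone `C`: it is a nonzero element of `C` that
cannot be written as a sum of two elements of `C` not both parallel to it. -/
def IsExtremeRay {V : Type*} [AddCommGroup V] [Module ℝ V] (C : Set V) (x : V) : Prop :=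
  x ∈ C ∧ x ≠ 0 ∧ ∀ y ∈ C, ∀ z ∈ C, x = y + z →
    (∃ t : ℝ, 0 ≤ t ∧ y = t • x) ∧ (∃ t : ℝ, 0 ≤ t ∧ z = t • x)

/-- Affine dimension of a subset of `ℝⁿ`. -/
def affDim {n : ℕ} (S : Set (Fin n → ℝ)) : ℕ :=
  Module.finrank ℝ (affineSpan ℝ S).direction


lemma dot_add' {n : ℕ} (a x y : Fin n → ℝ) : dot a (x + y) = dot a x + dot a y := by
  simp [dot, mul_add, Finset.sum_add_distrib]

lemma dot_smul' {n : ℕ} (a : Fin n → ℝ) (s : ℝ) (x : Fin n → ℝ) :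
    dot a (s • x) = s * dot a x := by
  simp [dot, Finset.mul_sum, mul_left_comm]

lemma dot_sum' {n : ℕ} (a : Fin n → ℝ) {ι : Type*} (s : Finset ι) (f : ι → Fin n → ℝ) :
    dot a (∑ i ∈ s, f i) = ∑ i ∈ s, dot a (f i) := by
  classical
  induction s using Finset.induction with
  | empty => simp [dot]
  | insert _ _ h ih =>
      rw [Finset.sum_insert h, Finset.sum_insert h, dot_add', ih]

/-- Same split-disjunction setup with unique nondegenerate bases at the
`c`-optimal vertices `p⁰, p¹`: every facet-defining inequality of the disjunctive hull
`P_D = cl conv(P⁰ ∪ P¹)` that is tight at both `p⁰` and `p¹` is valid for the simple point-ray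
hull `P_D⁰ = conv({p⁰,p¹}) + cone(R⁰)`; i.e., it satisfies `α·r ≥ 0` for every ray `r ∈ R⁰`
(and `α·pᵗ = β`). -/
theorem stmt_8 {n : ℕ} (P : Set (Fin n → ℝ)) (hpoly : IsPolyhedron P)
    (pi : Fin n → ℝ) (pi0 : ℝ)
    (Pt : Fin 2 → Set (Fin n → ℝ))
    (hsplit0 : Pt 0 = {x ∈ P | dot pi x ≤ pi0})
    (hsplit1 : Pt 1 = {x ∈ P | pi0 + 1 ≤ dot pi x})
    (hpointed : ∀ t, IsPointed (Pt t))
    (c : Fin n → ℝ)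
    (m : Fin 2 → ℕ) (A : ∀ t, Fin (m t) → (Fin n → ℝ)) (b : ∀ t, Fin (m t) → ℝ)
    (hrep : ∀ t, Pt t = {x | ∀ i, b t i ≤ dot (A t i) x})
    (p : Fin 2 → (Fin n → ℝ))
    (hvert : ∀ t, p t ∈ Set.extremePoints ℝ (Pt t))
    (hopt : ∀ t, ∀ x ∈ Pt t, dot c (p t) ≤ dot c x)
    (e : ∀ t, Fin n → Fin (m t)) (hinj : ∀ t, Function.Injective (e t))
    (htightset : ∀ t i, dot (A t i) (p t) = b t i ↔ i ∈ Set.range (e t))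
    (hnormindep : ∀ t, LinearIndependent ℝ (fun j => A t (e t j)))
    (r : Fin 2 → Fin n → (Fin n → ℝ))
    (hbasiscone : ∀ t, ({p t} + coneHull (Set.range (r t)) : Set (Fin n → ℝ)) =
      {x | ∀ j, b t (e t j) ≤ dot (A t (e t j)) x})
    (PD0 : Set (Fin n → ℝ))
    (hPD0 : PD0 = convexHull ℝ {p 0, p 1} + coneHull (⋃ t, Set.range (r t)))
    (α : Fin n → ℝ) (β : ℝ)
    (hvalidD : ∀ x ∈ closure (convexHull ℝ (Pt 0 ∪ Pt 1)), β ≤ dot α x)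
    (hfacetD : affDim (closure (convexHull ℝ (Pt 0 ∪ Pt 1)) ∩ {x | dot α x = β}) = n - 1)
    (htight0 : dot α (p 0) = β) (htight1 : dot α (p 1) = β) :
    (∀ t j, 0 ≤ dot α (r t j)) ∧ ∀ x ∈ PD0, β ≤ dot α x := by
  classical
  have hmem : ∀ t, p t ∈ Pt t := fun t => (hvert t).1
  have hsub : ∀ t : Fin 2, Pt t ⊆ closure (convexHull ℝ (Pt 0 ∪ Pt 1)) := by
    intro t
    have : Pt t ⊆ Pt 0 ∪ Pt 1 := by
      fin_cases t
      · exact Set.subset_union_left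
      · exact Set.subset_union_right
    exact (this.trans (subset_convexHull ℝ _)).trans subset_closure
  have htight : ∀ t : Fin 2, dot α (p t) = β := by
    intro t; fin_cases t <;> assumption
  have key : ∀ t j, 0 ≤ dot α (r t j) := by
    intro t j
    set q := r t j with hq
    have hbase_eq : ∀ j', dot (A t (e t j')) (p t) = b t (e t j') :=
      fun j' => (htightset t _).2 ⟨j', rfl⟩
    -- q is in the basis cone directions
    have hq_cone : p t + q ∈ ({p t} + coneHull (Set.range (r t)) : Set (Fin n → ℝ)) := by
      refine Set.add_mem_add rfl ?_
      exact ⟨{q}, fun _ => 1, by simpa using ⟨j, rfl⟩, fun _ _ => zero_le_one, by simp⟩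
    rw [hbasiscone t] at hq_cone
    have hbase : ∀ j', 0 ≤ dot (A t (e t j')) q := by
      intro j'
      have := hq_cone j'
      rw [dot_add', hbase_eq] at this
      linarith
    have hstrict : ∀ i, i ∉ Set.range (e t) → b t i < dot (A t i) (p t) := by
      intro i hi
      have h1 : b t i ≤ dot (A t i) (p t) := by
        have := hmem t; rw [hrep t] at this; exact this i
      exact lt_of_le_of_ne h1 (fun h => hi ((htightset t i).1 h.symm))
    have hev : ∀ᶠ s in nhdsWithin (0:ℝ) (Set.Ioi 0), p t + s • q ∈ Pt t := by
      rw [hrep t]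
      have hall : ∀ i : Fin (m t), ∀ᶠ s in nhdsWithin (0:ℝ) (Set.Ioi 0),
          b t i ≤ dot (A t i) (p t + s • q) := by
        intro i
        by_cases hi : i ∈ Set.range (e t)
        · obtain ⟨j', rfl⟩ := hi
          filter_upwards [self_mem_nhdsWithin] with s hs
          rw [dot_add', dot_smul', hbase_eq]
          have : (0:ℝ) ≤ s * dot (A t (e t j')) q :=
            mul_nonneg (le_of_lt hs) (hbase j')
          linarith
        · have hlt := hstrict i hi
          have hc : Continuous fun s : ℝ => dot (A t i) (p t + s • q) := by
            have : (fun s : ℝ => dot (A t i) (p t + s • q)) =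
                fun s : ℝ => dot (A t i) (p t) + s * dot (A t i) q := by
              funext s; rw [dot_add', dot_smul']
            rw [this]; fun_prop
          have h0 : Filter.Tendsto (fun s : ℝ => dot (A t i) (p t + s • q)) (nhds 0)
              (nhds (dot (A t i) (p t + (0:ℝ) • q))) := hc.continuousAt
          have h0' : dot (A t i) (p t + (0:ℝ) • q) = dot (A t i) (p t) := by
            simp [dot_add', dot_smul']
          rw [h0'] at h0
          have := h0.eventually_const_lt hlt
          exact (this.filter_mono nhdsWithin_le_nhds).mono (fun s hs => le_of_lt hs)
      exact Filter.eventually_all.2 hall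
    have hev2 : ∀ᶠ s in nhdsWithin (0:ℝ) (Set.Ioi 0),
        (0:ℝ) < s ∧ 0 ≤ s * dot α q := by
      filter_upwards [hev, self_mem_nhdsWithin] with s hs hspos
      refine ⟨hspos, ?_⟩
      have hx := hvalidD _ (hsub t hs)
      rw [dot_add', dot_smul', htight t] at hx
      linarith
    obtain ⟨s, hspos, hsle⟩ := hev2.exists
    nlinarith
  refine ⟨key, ?_⟩
  intro x hx
  rw [hPD0] at hx
  obtain ⟨y, hy, z, hz, rfl⟩ := hx
  have hy' : dot α y = β := by
    rw [convexHull_pair] at hy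
    obtain ⟨u, v, hu, hv, huv, rfl⟩ := hy
    rw [dot_add', dot_smul', dot_smul', htight 0, htight 1, ← add_mul, huv, one_mul]
  have hz' : 0 ≤ dot α z := by
    obtain ⟨S, cf, hS, hcf, rfl⟩ := hz
    rw [dot_sum']
    refine Finset.sum_nonneg fun w hw => ?_
    rw [dot_smul']
    have : w ∈ ⋃ t, Set.range (r t) := hS hw
    obtain ⟨t, j, rfl⟩ := by simpa only [Set.mem_iUnion, Set.mem_range] using this
    exact mul_nonneg (hcf _ hw) (key t j)
  rw [dot_add']
  linarith
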